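/- Let (Ω, μ) be a probability space; let A : Ω → E_A, X : Ω → E_X, Z : Ω → E_Z, W : Ω → E_W be measurable maps into standard Borel spaces; let φ : E_X × E_Z × E_W → E_V be measurable into a standard Borel space and set V := fun ω => φ (X ω, Z ω, W ω). Assume (sufficiency): for every bounded measurable f : E_A → ℝ, E[f ∘ A | σ(X, Z, W)] = E[f ∘ A | σ(W)] μ-almost everywhere. Let κ := condDistrib A W μ. Then for every bounded measurable h : E_A × E_V × E_W → ℝ, defining H (v, w) := ∫ h (a, v, w) d(κ w)(a), one has E[h(A, V, W) | σ(X, V, W)] = H(V, W) μ-almost everywhere; in particular, the conditional expectation of h(A, V, W) given (X, V, W) does not depend on X. -/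

import Mathlib

open MeasureTheory ProbabilityTheory

/-- Key identification step: under sufficiency of `W` for `A`, for any bounded measurable `h`
the conditional expectation of `h(A, V, W)` given `(X, V, W)`, where `V = φ(X, Z, W)` is the
control variable, equals the integral of `h(·, V, W)` against the conditional distribution
`condDistrib A W μ (W ·)`; in particular it does not depend on `X`. -/
theorem condexp_given_control_variable
    {Ω E_A E_X E_Z E_W E_V : Type*} [MeasurableSpace Ω]
    [MeasurableSpace E_A] [StandardBorelSpace E_A] [Nonempty E_A]
    [MeasurableSpace E_X] [StandardBorelSpace E_X]
    [MeasurableSpace E_Z] [StandardBorelSpace E_Z]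
    [MeasurableSpace E_W] [StandardBorelSpace E_W]
    [MeasurableSpace E_V] [StandardBorelSpace E_V]
    (μ : Measure Ω) [IsProbabilityMeasure μ]
    (A : Ω → E_A) (X : Ω → E_X) (Z : Ω → E_Z) (W : Ω → E_W)
    (hA : Measurable A) (hX : Measurable X) (hZ : Measurable Z) (hW : Measurable W)
    (φ : E_X × E_Z × E_W → E_V) (hφ : Measurable φ)
    (V : Ω → E_V) (hV : ∀ ω, V ω = φ (X ω, Z ω, W ω))
    (hsuff : ∀ f : E_A → ℝ, Measurable f → (∃ C, ∀ a, |f a| ≤ C) →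
      μ[fun ω => f (A ω) |
          MeasurableSpace.comap (fun ω => (X ω, Z ω, W ω)) inferInstance]
        =ᵐ[μ] μ[fun ω => f (A ω) | MeasurableSpace.comap W inferInstance]) :
    ∀ h : E_A × E_V × E_W → ℝ, Measurable h → (∃ C, ∀ p, |h p| ≤ C) →
      μ[fun ω => h (A ω, V ω, W ω) |
          MeasurableSpace.comap (fun ω => (X ω, V ω, W ω)) inferInstance]
        =ᵐ[μ] fun ω => ∫ a, h (a, V ω, W ω) ∂(condDistrib A W μ (W ω)) := by
  intro h hh hbd
  obtain ⟨C, hC⟩ := hbd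
  set T : Ω → E_X × E_Z × E_W := fun ω => (X ω, Z ω, W ω) with hTdef
  have hTm : Measurable T := hX.prodMk (hZ.prodMk hW)
  set κ := condDistrib A W μ with hκdef
  have hW2 : Measurable (fun t : E_X × E_Z × E_W => t.2.2) :=
    measurable_snd.comp measurable_snd
  set η : ProbabilityTheory.Kernel (E_X × E_Z × E_W) E_A := κ.comap (fun t => t.2.2) hW2
    with hηdef
  have hVm : Measurable V := by
    have : V = fun ω => φ (T ω) := funext hV
    rw [this]; exact hφ.comp hTm
  -- Step A: rectangle computation
  have key : ∀ s : Set (E_X × E_Z × E_W), MeasurableSet s → ∀ t : Set E_A, MeasurableSet t →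
      μ.map (fun ω => (T ω, A ω)) (s ×ˢ t) = (μ.map T ⊗ₘ η) (s ×ˢ t) := by
    intro s hs t ht
    rw [Measure.map_apply (hTm.prodMk hA) (hs.prod ht), Set.mk_preimage_prod,
      Measure.compProd_apply_prod hs ht,
      setLIntegral_map hs (η.measurable_coe ht) hTm]
    have hηT : ∀ ω, η (T ω) t = κ (W ω) t := fun ω => by
      rw [hηdef, ProbabilityTheory.Kernel.comap_apply]
    -- sufficiency for the indicator of t
    have hind : (fun ω => Set.indicator t (fun _ => (1:ℝ)) (A ω))
        = Set.indicator (A ⁻¹' t) (fun _ => (1:ℝ)) := by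
      ext ω; by_cases hx : A ω ∈ t <;> simp [Set.indicator_apply, hx]
    have h1 := hsuff (Set.indicator t (fun _ => (1:ℝ)))
      (measurable_const.indicator ht)
      ⟨1, fun a => by by_cases hx : a ∈ t <;> simp [Set.indicator_apply, hx]⟩
    rw [hind] at h1
    have h2 := condDistrib_ae_eq_condExp (μ := μ) hW hA ht
    have h3 : μ⟦A ⁻¹' t | MeasurableSpace.comap T inferInstance⟧
        =ᵐ[μ] fun ω => (κ (W ω) t).toReal := h1.trans h2.symm
    have hTs : MeasurableSet[MeasurableSpace.comap T inferInstance] (T ⁻¹' s) := ⟨s, hs, rfl⟩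
    have hint_ind : Integrable ((A ⁻¹' t).indicator fun _ => (1:ℝ)) μ :=
      (integrable_const 1).indicator (hA ht)
    have e2 := setIntegral_condExp hTm.comap_le hint_ind hTs
    have e3 : ∫ ω in T ⁻¹' s, (μ⟦A ⁻¹' t | MeasurableSpace.comap T inferInstance⟧) ω ∂μ
        = ∫ ω in T ⁻¹' s, (κ (W ω) t).toReal ∂μ :=
      integral_congr_ae (ae_restrict_of_ae h3)
    have e1 : ∫ ω in T ⁻¹' s, (A ⁻¹' t).indicator (fun _ => (1:ℝ)) ω ∂μ
        = (μ (A ⁻¹' t ∩ T ⁻¹' s)).toReal := by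
      rw [integral_indicator_const (1:ℝ) (hA ht), measureReal_restrict_apply (hA ht),
        smul_eq_mul, mul_one, measureReal_def]
    have hmeasκ : Measurable fun ω => κ (W ω) t := (κ.measurable_coe ht).comp hW
    have e4 : ∫ ω in T ⁻¹' s, (κ (W ω) t).toReal ∂μ
        = (∫⁻ ω in T ⁻¹' s, κ (W ω) t ∂μ).toReal := by
      refine integral_toReal hmeasκ.aemeasurable ?_
      exact Filter.Eventually.of_forall fun ω => measure_lt_top _ _
    have hfin : ∫⁻ ω in T ⁻¹' s, κ (W ω) t ∂μ ≠ ⊤ := by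
      refine ne_top_of_le_ne_top (measure_ne_top μ (T ⁻¹' s)) ?_
      calc ∫⁻ ω in T ⁻¹' s, κ (W ω) t ∂μ ≤ ∫⁻ _ in T ⁻¹' s, 1 ∂μ :=
            lintegral_mono fun ω => prob_le_one
        _ = μ (T ⁻¹' s) := by simp
    have htoReal : (μ (A ⁻¹' t ∩ T ⁻¹' s)).toReal
        = (∫⁻ ω in T ⁻¹' s, κ (W ω) t ∂μ).toReal := by
      rw [← e1, ← e4, ← e3, e2]
    have := (ENNReal.toReal_eq_toReal_iff' (measure_ne_top μ _) hfin).mp htoReal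
    simp only [hηT]
    rw [Set.inter_comm] at this
    exact this
  -- Step A': the compProd identity
  haveI : IsProbabilityMeasure (μ.map (fun ω => (T ω, A ω))) :=
    Measure.isProbabilityMeasure_map (hTm.prodMk hA).aemeasurable
  haveI : IsProbabilityMeasure (μ.map T) := Measure.isProbabilityMeasure_map hTm.aemeasurable
  have hcomp : μ.map (fun ω => (T ω, A ω)) = μ.map T ⊗ₘ η := by
    refine ext_of_generate_finite _ generateFrom_prod.symm isPiSystem_prod ?_ ?_
    · rintro u ⟨s, hs, t, ht, rfl⟩
      exact key s hs t ht
    · simp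
  -- Step B: identify η with condDistrib A T μ
  have hae : ∀ᵐ x ∂(μ.map T), η x = condDistrib A T μ x :=
    (condDistrib_ae_eq_of_measure_eq_compProd T hA.aemeasurable hcomp).mono fun x hx => hx.symm
  have hae' : ∀ᵐ ω ∂μ, η (T ω) = condDistrib A T μ (T ω) :=
    ae_of_ae_map hTm.aemeasurable hae
  -- Step C: conditional expectation given σ(T)
  set f : (E_X × E_Z × E_W) × E_A → ℝ := fun p => h (p.2, φ p.1, p.1.2.2) with hfdef
  have hfm : Measurable f :=
    hh.comp (measurable_snd.prodMk ((hφ.comp measurable_fst).prodMk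
      (hW2.comp measurable_fst)))
  have hgeq : (fun ω => f (T ω, A ω)) = fun ω => h (A ω, V ω, W ω) := by
    funext ω; simp [hfdef, hTdef, hV ω]
  have hint : Integrable (fun ω => f (T ω, A ω)) μ := by
    refine (integrable_const C).mono' (hfm.comp (hTm.prodMk hA)).aestronglyMeasurable
      (Filter.Eventually.of_forall fun ω => ?_)
    simpa [Real.norm_eq_abs] using hC _
  have hstep := condExp_prod_ae_eq_integral_condDistrib hTm hA.aemeasurable
    hfm.stronglyMeasurable hint
  -- rewrite the RHS of hstep using hae'
  set G : E_V × E_W → ℝ := fun p => ∫ a, h (a, p.1, p.2) ∂(κ p.2) with hGdef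
  have hstep' : μ[fun ω => h (A ω, V ω, W ω) |
      MeasurableSpace.comap T inferInstance] =ᵐ[μ] fun ω => G (V ω, W ω) := by
    rw [← hgeq]
    refine hstep.trans ?_
    filter_upwards [hae'] with ω hω
    rw [← hω, hηdef, hGdef]
    simp only [ProbabilityTheory.Kernel.comap_apply, hfdef, hTdef, hV ω]
  -- measurability of G
  have hGm : StronglyMeasurable G := by
    have hmeas : Measurable fun q : (E_V × E_W) × E_A => h (q.2, q.1.1, q.1.2) :=
      hh.comp (measurable_snd.prodMk ((measurable_fst.comp measurable_fst).prodMk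
        (measurable_snd.comp measurable_fst)))
    have := hmeas.stronglyMeasurable.integral_kernel_prod_right'
      (κ := κ.comap Prod.snd measurable_snd)
    simpa [ProbabilityTheory.Kernel.comap_apply, hGdef] using this
  -- Step D: tower property
  have hψ : Measurable fun t : E_X × E_Z × E_W => (t.1, φ t, t.2.2) :=
    measurable_fst.prodMk (hφ.prodMk hW2)
  have hm1 : MeasurableSpace.comap (fun ω => (X ω, V ω, W ω)) inferInstance
      ≤ MeasurableSpace.comap T inferInstance := by
    rintro u ⟨s, hs, rfl⟩
    refine ⟨(fun t : E_X × E_Z × E_W => (t.1, φ t, t.2.2)) ⁻¹' s, hψ hs, ?_⟩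
    ext ω; simp [hTdef, hV ω]
  have hm2 : MeasurableSpace.comap T inferInstance ≤ ‹MeasurableSpace Ω› := hTm.comap_le
  have hXVWm1 : Measurable[MeasurableSpace.comap (fun ω => (X ω, V ω, W ω)) inferInstance]
      fun ω => (X ω, V ω, W ω) := Measurable.of_comap_le le_rfl
  have hGVWm1 : StronglyMeasurable[MeasurableSpace.comap
      (fun ω => (X ω, V ω, W ω)) inferInstance] fun ω => G (V ω, W ω) := by
    have hproj : Measurable[MeasurableSpace.comap (fun ω => (X ω, V ω, W ω)) inferInstance]
        fun ω => (V ω, W ω) := measurable_snd.comp hXVWm1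
    exact hGm.comp_measurable hproj
  have hGbd : ∀ ω, ‖G (V ω, W ω)‖ ≤ C := fun ω => by
    have : ‖∫ a, h (a, V ω, W ω) ∂(κ (W ω))‖ ≤ C * (κ (W ω) Set.univ).toReal :=
      norm_integral_le_of_norm_le_const
        (Filter.Eventually.of_forall fun a => by simpa [Real.norm_eq_abs] using hC _)
    simpa [hGdef] using this
  have hGint : Integrable (fun ω => G (V ω, W ω)) μ := by
    refine (integrable_const C).mono'
      (hGm.measurable.comp (hVm.prodMk hW)).aestronglyMeasurable
      (Filter.Eventually.of_forall hGbd)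
  have tower := condExp_condExp_of_le hm1 hm2
    (μ := μ) (f := fun ω => h (A ω, V ω, W ω))
  refine tower.symm.trans ?_
  refine (condExp_congr_ae hstep').trans ?_
  rw [condExp_of_stronglyMeasurable (hm1.trans hm2) hGVWm1 hGint]
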